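/- Let G be a graph of order n and let k ≥ 1 be an integer with 2k ≤ δ(G). Then γ_{×2k,t}(G_I) = 2kn if and only if G is a kHLD-graph (i.e., G contains k pairwise edge-disjoint 2-factors). -/

import Mathlib

open SimpleGraph

/-- The inflated graph `G_I` of a graph `G`: its vertices are the darts (oriented edges) of
`G`; the darts with first coordinate `x` form the clique `X_x` (of size `deg x`), and each
edge `xy` of `G` gives the "blue" edge between the dart `(x,y)` and its reverse `(y,x)`;
these blue edges form a perfect matching.  Equivalently, `inflation G` is the line graph of
the subdivision of `G`. -/
def inflation {V : Type*} (G : SimpleGraph V) : SimpleGraph G.Dart :=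
  SimpleGraph.fromRel (fun d₁ d₂ => d₁.toProd.1 = d₂.toProd.1 ∨ d₁.toProd = d₂.toProd.swap)

/-- `S` is a `k`-tuple total dominating set of `H`: every vertex has at least `k`
neighbours in `S`. -/
def IsKTDS {W : Type*} (H : SimpleGraph W) (k : ℕ) (S : Set W) : Prop :=
  ∀ v : W, k ≤ (S ∩ H.neighborSet v).ncard

/-- The `k`-tuple total domination number of `H`: the minimum cardinality of a `k`-tuple
total dominating set. -/
noncomputable def ktdn {W : Type*} (H : SimpleGraph W) (k : ℕ) : ℕ :=
  sInf {n | ∃ S : Set W, IsKTDS H k S ∧ S.ncard = n}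

/-- `H` is a 2-factor of `G`: a spanning 2-regular subgraph of `G`, i.e. a vertex-disjoint
union of cycles covering all vertices. -/
def IsTwoFactor {V : Type*} (G H : SimpleGraph V) : Prop :=
  H ≤ G ∧ ∀ v : V, (H.neighborSet v).ncard = 2

/-- `G` is a `k`-Hamiltonian-like decomposable graph (kHLD-graph): `G` contains `k`
pairwise edge-disjoint 2-factors. -/
def IsKHLD {V : Type*} (G : SimpleGraph V) (k : ℕ) : Prop :=
  ∃ F : Fin k → SimpleGraph V, (∀ i, IsTwoFactor G (F i)) ∧
    ∀ i j, i ≠ j → Disjoint (F i) (F j)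

/-- `M` is a perfect matching of `G`, viewed as a 1-regular spanning subgraph. -/
def IsPerfectMatchingGraph {V : Type*} (G M : SimpleGraph V) : Prop :=
  M ≤ G ∧ ∀ v : V, (M.neighborSet v).ncard = 1

/-- `M` is a matching of `G`: a subgraph of maximum degree at most 1. -/
def IsMatchingGraph {V : Type*} (G M : SimpleGraph V) : Prop :=
  M ≤ G ∧ ∀ v : V, (M.neighborSet v).ncard ≤ 1

/-- `G` is a kHLPM-graph: `G` contains `k` pairwise edge-disjoint 2-factors together with
a perfect matching edge-disjoint from each of these 2-factors. -/
def IsKHLPM {V : Type*} (G : SimpleGraph V) (k : ℕ) : Prop :=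
  ∃ (F : Fin k → SimpleGraph V) (M : SimpleGraph V),
    (∀ i, IsTwoFactor G (F i)) ∧ (∀ i j, i ≠ j → Disjoint (F i) (F j)) ∧
    IsPerfectMatchingGraph G M ∧ ∀ i, Disjoint M (F i)

/-- `G` is a kHLMM-graph: `G` contains `k` pairwise edge-disjoint 2-factors together with
a matching of size `⌊n/2⌋` edge-disjoint from each of these 2-factors. -/
def IsKHLMM {V : Type*} [Fintype V] (G : SimpleGraph V) (k : ℕ) : Prop :=
  ∃ (F : Fin k → SimpleGraph V) (M : SimpleGraph V),
    (∀ i, IsTwoFactor G (F i)) ∧ (∀ i j, i ≠ j → Disjoint (F i) (F j)) ∧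
    IsMatchingGraph G M ∧ M.edgeSet.ncard = Fintype.card V / 2 ∧ ∀ i, Disjoint M (F i)

/-- The graph `F` on `V ⊕ W` obtained from the disjoint union of `G` (on `V`) and `H`
(on `W`) by adding the single edge between `x : V` and `y : W`.  When `G` and `H` are
connected, this added edge is a cut-edge of `F` whose removal leaves exactly the two
components `G` and `H`. -/
def joinByEdge {V W : Type*} (G : SimpleGraph V) (H : SimpleGraph W) (x : V) (y : W) :
    SimpleGraph (V ⊕ W) :=
  SimpleGraph.fromRel (fun a b =>
    match a, b with
    | Sum.inl u, Sum.inl v => G.Adj u v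
    | Sum.inr u, Sum.inr v => H.Adj u v
    | Sum.inl u, Sum.inr v => u = x ∧ v = y
    | Sum.inr _, Sum.inl _ => False)

/-- The generalized Petersen graph `P(n,m)`: vertices `a_i` (the left copies) and `b_i`
(the right copies) for `i ∈ ZMod n`, with edges `a_i a_{i+1}`, `a_i b_i`, `b_i b_{i+m}`. -/
def genPetersen (n m : ℕ) : SimpleGraph (ZMod n ⊕ ZMod n) :=
  SimpleGraph.fromRel (fun a b =>
    match a, b with
    | Sum.inl i, Sum.inl j => j = i + 1
    | Sum.inl i, Sum.inr j => j = i
    | Sum.inr i, Sum.inr j => j = i + (m : ZMod n)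
    | Sum.inr _, Sum.inl _ => False)

/-- Cyclic distance between `i` and `j` on the cycle `ZMod n`. -/
def cycDist (n : ℕ) (i j : ZMod n) : ℕ := min (i - j).val (j - i).val

/-- The Harary graph `H_{m,n}` on `ZMod n`: each vertex is adjacent to the nearest `m/2`
vertices in each direction around the circle; if `m` is odd and `n` is even, each vertex
is also adjacent to the diametrically opposite vertex; if `m` and `n` are both odd, the
edges `(i, i + (n-1)/2)` for `0 ≤ i ≤ (n-1)/2` are added instead. -/
def harary (m n : ℕ) : SimpleGraph (ZMod n) :=
  SimpleGraph.fromRel (fun i j =>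
    (1 ≤ cycDist n i j ∧ cycDist n i j ≤ m / 2) ∨
    (m % 2 = 1 ∧ n % 2 = 0 ∧ j = i + ((n / 2 : ℕ) : ZMod n)) ∨
    (m % 2 = 1 ∧ n % 2 = 1 ∧ (∃ t : ℕ, t ≤ (n - 1) / 2 ∧ i = (t : ZMod n)) ∧
      j = i + (((n - 1) / 2 : ℕ) : ZMod n)))

/-- The graph obtained by gluing the graphs `G i` (on vertex types `V i`) at the
distinguished vertices `x i`, which are all identified to the single vertex `none`.
The `v`-components of the resulting graph at the cut-vertex `v = none` are exactly
(canonical copies of) the graphs `G i`. -/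
def wedgeAt {m : ℕ} {V : Fin m → Type*} (G : ∀ i, SimpleGraph (V i)) (x : ∀ i, V i) :
    SimpleGraph (Option (Σ i : Fin m, {u : V i // u ≠ x i})) :=
  SimpleGraph.fromRel (fun a b =>
    match a, b with
    | none, some ⟨i, u⟩ => (G i).Adj (x i) u.val
    | some ⟨i, u⟩, some ⟨j, w⟩ => ∃ h : i = j, (G j).Adj (cast (congrArg V h) u.val) w.val
    | _, _ => False)

open Finset

section HallPart

variable {V : Type*} [Fintype V] [DecidableEq V]

lemma hall_step (k : ℕ) (hk : 0 < k) (r : V → Finset V)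
    (h1 : ∀ v, #(r v) = k) (h2 : ∀ u : V, #{v | u ∈ r v} = k) :
    ∃ f : V → V, Function.Injective f ∧ ∀ v, f v ∈ r v := by
  have hall : ∀ A : Finset V, #A ≤ #(A.biUnion r) := by
    intro A
    have key : ∑ v ∈ A, #(r v) ≤ k * #(A.biUnion r) := by
      have e1 : ∀ v ∈ A, #(r v) = ∑ u ∈ A.biUnion r, if u ∈ r v then 1 else 0 := by
        intro v hv
        rw [← Finset.card_filter]
        congr 1
        rw [Finset.filter_mem_eq_inter]
        symm
        rw [Finset.inter_eq_right]
        intro u hu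
        exact Finset.mem_biUnion.2 ⟨v, hv, hu⟩
      rw [Finset.sum_congr rfl e1, Finset.sum_comm]
      have e2 : ∀ u ∈ A.biUnion r, (∑ v ∈ A, if u ∈ r v then 1 else 0) ≤ k := by
        intro u _
        rw [← Finset.card_filter]
        calc #{v ∈ A | u ∈ r v} ≤ #({v | u ∈ r v} : Finset V) := by
              apply Finset.card_le_card
              intro v hv
              simp only [Finset.mem_filter, Finset.mem_univ, true_and] at *
              exact hv.2
          _ = k := h2 u
      calc ∑ u ∈ A.biUnion r, ∑ v ∈ A, (if u ∈ r v then 1 else 0)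
          ≤ ∑ _u ∈ A.biUnion r, k := Finset.sum_le_sum e2
        _ = k * #(A.biUnion r) := by rw [Finset.sum_const, smul_eq_mul, mul_comm]
    have : k * #A ≤ k * #(A.biUnion r) := by
      calc k * #A = ∑ v ∈ A, #(r v) := by
            rw [Finset.sum_congr rfl (fun v _ => h1 v), Finset.sum_const, smul_eq_mul, mul_comm]
        _ ≤ _ := key
    exact Nat.le_of_mul_le_mul_left this hk
  obtain ⟨f, hf, hfr⟩ := (Finset.all_card_le_biUnion_card_iff_exists_injective r).1 hall
  exact ⟨f, hf, hfr⟩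

lemma hall_peel (k : ℕ) (r : V → Finset V)
    (h1 : ∀ v, #(r v) = k) (h2 : ∀ u : V, #{v | u ∈ r v} = k) :
    ∃ f : Fin k → V → V, (∀ i, Function.Injective (f i)) ∧ (∀ i v, f i v ∈ r v) ∧
      (∀ i j v, i ≠ j → f i v ≠ f j v) := by
  induction k generalizing r with
  | zero => exact ⟨fun i => absurd i.2 (by omega), fun i => absurd i.2 (by omega),
      fun i => absurd i.2 (by omega), fun i => absurd i.2 (by omega)⟩
  | succ k ih =>
    obtain ⟨f0, hf0inj, hf0r⟩ := hall_step (k+1) (Nat.succ_pos k) r h1 h2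
    have hf0surj : Function.Surjective f0 := Finite.surjective_of_injective hf0inj
    set r' : V → Finset V := fun v => (r v).erase (f0 v) with hr'
    have h1' : ∀ v, #(r' v) = k := by
      intro v
      rw [hr']
      rw [Finset.card_erase_of_mem (hf0r v), h1]
      omega
    have h2' : ∀ u : V, #{v | u ∈ r' v} = k := by
      intro u
      obtain ⟨w, hw⟩ := hf0surj u
      have : ({v | u ∈ r' v} : Finset V) = ({v | u ∈ r v} : Finset V).erase w := by
        ext v
        simp only [hr', Finset.mem_erase, Finset.mem_filter, Finset.mem_univ, true_and]
        constructor
        · rintro ⟨hne, hu⟩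
          refine ⟨?_, hu⟩
          rintro rfl; exact hne hw.symm
        · rintro ⟨hne, hu⟩
          refine ⟨?_, hu⟩
          intro h
          exact hne (hf0inj (by rw [← h, hw]))
      have hwmem : w ∈ ({v | u ∈ r v} : Finset V) := by
        simp only [Finset.mem_filter, Finset.mem_univ, true_and]
        rw [← hw]; exact hf0r w
      rw [this, Finset.card_erase_of_mem hwmem, h2]
      omega
    obtain ⟨f', hinj', hr'', hdist'⟩ := ih r' h1' h2'
    refine ⟨Fin.cons f0 f', ?_, ?_, ?_⟩
    · intro i
      refine Fin.cases ?_ ?_ i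
      · simpa using hf0inj
      · intro j; simpa using hinj' j
    · intro i v
      refine Fin.cases ?_ ?_ i
      · simpa using hf0r v
      · intro j
        simp only [Fin.cons_succ]
        exact Finset.mem_of_mem_erase (hr'' j v)
    · intro i j v hij
      rcases Fin.eq_zero_or_eq_succ i with rfl | ⟨i', rfl⟩ <;>
        rcases Fin.eq_zero_or_eq_succ j with rfl | ⟨j', rfl⟩
      · exact absurd rfl hij
      · simp only [Fin.cons_zero, Fin.cons_succ]
        intro h
        have := hr'' j' v
        rw [hr'] at this
        exact (Finset.ne_of_mem_erase this) h.symm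
      · simp only [Fin.cons_zero, Fin.cons_succ]
        intro h
        have := hr'' i' v
        rw [hr'] at this
        exact (Finset.ne_of_mem_erase this) h
      · simp only [Fin.cons_succ]
        exact hdist' i' j' v (fun h => hij (by rw [h]))

end HallPart

section CycPart
variable {V : Type*} {H : SimpleGraph V} {v : V}


section CycAux
variable {c : H.Walk v v}

lemma cycle_decomp (hc : c.IsCycle) :
    ∃ (w : V) (h : H.Adj v w) (q : H.Walk w v), c = Walk.cons h q :=
  Walk.not_nil_iff.1 hc.not_nil

lemma tail_eq_support (w : V) (h : H.Adj v w) (q : H.Walk w v) :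
    (Walk.cons h q).support.tail = q.support := by simp

lemma support_split (w : V) (h : H.Adj v w) (q : H.Walk w v) :
    q.support.dropLast ++ [v] = q.support := by
  have hne := q.support_ne_nil
  have key := List.dropLast_append_getLast (l := q.support) hne
  rw [show q.support.getLast hne = v from q.getLast_support] at key
  exact key

lemma v_mem_tail (hc : c.IsCycle) : v ∈ c.support.tail := by
  obtain ⟨w, h, q, rfl⟩ := cycle_decomp hc
  rw [tail_eq_support]
  exact q.end_mem_support

lemma fst_darts_nodup (hc : c.IsCycle) : (c.darts.map (fun d => d.toProd.1)).Nodup := by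
  obtain ⟨w, h, q, rfl⟩ := cycle_decomp hc
  have hnd := hc.support_nodup
  rw [tail_eq_support] at hnd
  rw [Walk.map_fst_darts]
  have : (Walk.cons h q).support.dropLast = v :: q.support.dropLast := by
    rw [Walk.support_cons, List.dropLast_cons_of_ne_nil q.support_ne_nil]
  rw [this]
  refine List.nodup_cons.2 ⟨?_, hnd.sublist (List.dropLast_sublist _)⟩
  intro hmem
  have key := support_split w h q
  rw [← key, List.nodup_append] at hnd
  exact hnd.2.2 v hmem v (by simp) rfl

lemma snd_darts_nodup (hc : c.IsCycle) : (c.darts.map (fun d => d.toProd.2)).Nodup := by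
  rw [Walk.map_snd_darts]
  exact hc.support_nodup

lemma darts_nodup (hc : c.IsCycle) : c.darts.Nodup := (fst_darts_nodup hc).of_map

lemma mem_fst_darts (hc : c.IsCycle) {x : V} :
    x ∈ c.darts.map (fun d => d.toProd.1) ↔ x ∈ c.support := by
  obtain ⟨w, h, q, rfl⟩ := cycle_decomp hc
  rw [Walk.map_fst_darts, Walk.support_cons, List.dropLast_cons_of_ne_nil q.support_ne_nil]
  simp only [List.mem_cons]
  constructor
  · rintro (rfl | hx)
    · exact Or.inl rfl
    · exact Or.inr ((List.dropLast_sublist _).mem hx)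
  · rintro (rfl | hx)
    · exact Or.inl rfl
    · by_cases hxv : x = v
      · exact Or.inl hxv
      · refine Or.inr ?_
        rw [← support_split w h q, List.mem_append] at hx
        rcases hx with hx | hx
        · exact hx
        · simp at hx; exact absurd hx hxv

lemma mem_snd_darts (hc : c.IsCycle) {x : V} :
    x ∈ c.darts.map (fun d => d.toProd.2) ↔ x ∈ c.support := by
  rw [Walk.map_snd_darts, Walk.mem_support_iff]
  constructor
  · intro hx; exact Or.inr hx
  · rintro (rfl | hx)
    · exact v_mem_tail hc
    · exact hx

lemma exists_unique_fst (hc : c.IsCycle) {x : V} (hx : x ∈ c.support) :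
    ∃! d : H.Dart, d ∈ c.darts ∧ d.toProd.1 = x := by
  obtain ⟨d, hd, hdx⟩ := List.mem_map.1 ((mem_fst_darts hc).2 hx)
  refine ⟨d, ⟨hd, hdx⟩, ?_⟩
  rintro e ⟨he, hex⟩
  exact List.inj_on_of_nodup_map (fst_darts_nodup hc) he hd (by rw [hex, hdx])

lemma exists_unique_snd (hc : c.IsCycle) {x : V} (hx : x ∈ c.support) :
    ∃! d : H.Dart, d ∈ c.darts ∧ d.toProd.2 = x := by
  obtain ⟨d, hd, hdx⟩ := List.mem_map.1 ((mem_snd_darts hc).2 hx)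
  refine ⟨d, ⟨hd, hdx⟩, ?_⟩
  rintro e ⟨he, hex⟩
  exact List.inj_on_of_nodup_map (snd_darts_nodup hc) he hd (by rw [hex, hdx])

lemma edge_mem_cycle_iff {x y : V} :
    s(x,y) ∈ c.edges ↔ (∃ d ∈ c.darts, d.toProd = (x,y)) ∨ (∃ d ∈ c.darts, d.toProd = (y,x)) := by
  simp only [Walk.edges, List.mem_map]
  constructor
  · rintro ⟨d, hd, hde⟩
    rw [Dart.edge, Sym2.eq_iff] at hde
    rcases hde with ⟨h1, h2⟩ | ⟨h1, h2⟩
    · exact Or.inl ⟨d, hd, Prod.ext h1 h2⟩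
    · exact Or.inr ⟨d, hd, Prod.ext h1 h2⟩
  · rintro (⟨d, hd, hde⟩ | ⟨d, hd, hde⟩)
    · exact ⟨d, hd, by rw [Dart.edge, hde]⟩
    · exact ⟨d, hd, by rw [Dart.edge, hde]; exact Sym2.eq_swap⟩

lemma not_both_darts (hc : c.IsCycle) {x y : V} (h1 : ∃ d ∈ c.darts, d.toProd = (x,y))
    (h2 : ∃ d ∈ c.darts, d.toProd = (y,x)) : False := by
  obtain ⟨d1, hd1, he1⟩ := h1
  obtain ⟨d2, hd2, he2⟩ := h2
  have hxy : x ≠ y := by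
    have := d1.adj
    rw [he1] at this
    exact this.ne
  have hedges : (c.darts.map Dart.edge).Nodup := hc.isTrail.edges_nodup
  have : d1 = d2 := by
    refine List.inj_on_of_nodup_map hedges hd1 hd2 ?_
    show d1.edge = d2.edge
    rw [Dart.edge, Dart.edge, he1, he2]
    exact Sym2.eq_swap
  rw [this, he2] at he1
  exact hxy (by simpa using congrArg Prod.fst he1.symm)

end CycAux

end CycPart

section OrientPart
variable {V : Type*} {H : SimpleGraph V} {v : V}
section OrientAux
variable [DecidableEq V] {c : H.Walk v v}

/-- the darts of a cycle as a finset of ordered pairs -/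
def cycO (c : H.Walk v v) : Finset (V × V) := (c.darts.map Dart.toProd).toFinset

lemma mem_cycO {p : V × V} : p ∈ cycO c ↔ ∃ d ∈ c.darts, d.toProd = p := by
  simp [cycO]

lemma cycO_adj {p : V × V} (hp : p ∈ cycO c) : H.Adj p.1 p.2 := by
  obtain ⟨d, _, rfl⟩ := mem_cycO.1 hp
  exact d.adj

lemma cycO_edge {p : V × V} (hp : p ∈ cycO c) : s(p.1, p.2) ∈ c.edges := by
  obtain ⟨d, hd, rfl⟩ := mem_cycO.1 hp
  exact Or.elim (Or.inl ⟨d, hd, rfl⟩) (fun h => edge_mem_cycle_iff.2 (Or.inl h)) (fun h => h)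

lemma cycO_xor (hc : c.IsCycle) {x y : V} (he : s(x,y) ∈ c.edges) :
    (x,y) ∈ cycO c ↔ (y,x) ∉ cycO c := by
  rw [mem_cycO, mem_cycO]
  constructor
  · intro h1 h2
    exact not_both_darts hc h1 h2
  · intro h2
    rcases edge_mem_cycle_iff.1 he with h | h
    · exact h
    · exact absurd h h2

lemma cycO_filter_fst (hc : c.IsCycle) (x : V) :
    #((cycO c).filter (fun p => p.1 = x)) = if x ∈ c.support then 1 else 0 := by
  split_ifs with hx
  · obtain ⟨d, ⟨hd, hdx⟩, hun⟩ := exists_unique_fst hc hx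
    have : (cycO c).filter (fun p => p.1 = x) = {d.toProd} := by
      ext p
      simp only [Finset.mem_filter, Finset.mem_singleton, mem_cycO]
      constructor
      · rintro ⟨⟨e, he, rfl⟩, hex⟩
        rw [hun e ⟨he, hex⟩]
      · rintro rfl
        exact ⟨⟨d, hd, rfl⟩, hdx⟩
    rw [this, Finset.card_singleton]
  · rw [Finset.card_eq_zero, Finset.filter_eq_empty_iff]
    rintro p hp rfl
    obtain ⟨d, hd, rfl⟩ := mem_cycO.1 hp
    exact hx ((mem_fst_darts hc).1 (List.mem_map.2 ⟨d, hd, rfl⟩))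

lemma cycO_filter_snd (hc : c.IsCycle) (x : V) :
    #((cycO c).filter (fun p => p.2 = x)) = if x ∈ c.support then 1 else 0 := by
  split_ifs with hx
  · obtain ⟨d, ⟨hd, hdx⟩, hun⟩ := exists_unique_snd hc hx
    have : (cycO c).filter (fun p => p.2 = x) = {d.toProd} := by
      ext p
      simp only [Finset.mem_filter, Finset.mem_singleton, mem_cycO]
      constructor
      · rintro ⟨⟨e, he, rfl⟩, hex⟩
        rw [hun e ⟨he, hex⟩]
      · rintro rfl
        exact ⟨⟨d, hd, rfl⟩, hdx⟩
    rw [this, Finset.card_singleton]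
  · rw [Finset.card_eq_zero, Finset.filter_eq_empty_iff]
    rintro p hp rfl
    obtain ⟨d, hd, rfl⟩ := mem_cycO.1 hp
    exact hx ((mem_snd_darts hc).1 (List.mem_map.2 ⟨d, hd, rfl⟩))

lemma deleteEdges_cycle_nbhd (hc : c.IsCycle) (w : V) (hw : w ∉ c.support) :
    (H.deleteEdges {e | e ∈ c.edges}).neighborSet w = H.neighborSet w := by
  ext u
  simp only [mem_neighborSet, deleteEdges_adj, Set.mem_setOf_eq, and_iff_left_iff_imp]
  intro hadj he
  rcases edge_mem_cycle_iff.1 he with ⟨d, hd, hde⟩ | ⟨d, hd, hde⟩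
  · exact hw ((mem_fst_darts hc).1 (List.mem_map.2 ⟨d, hd, by rw [hde]⟩))
  · exact hw ((mem_snd_darts hc).1 (List.mem_map.2 ⟨d, hd, by rw [hde]⟩))

lemma deleteEdges_cycle_nbhd_mem (hc : c.IsCycle) (w : V) (hw : w ∈ c.support) :
    ∃ a b : V, a ≠ b ∧ a ∈ H.neighborSet w ∧ b ∈ H.neighborSet w ∧
      (H.deleteEdges {e | e ∈ c.edges}).neighborSet w = H.neighborSet w \ {a, b} := by
  obtain ⟨d, ⟨hd, hdw⟩, hund⟩ := exists_unique_fst hc hw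
  obtain ⟨e, ⟨he, hew⟩, hune⟩ := exists_unique_snd hc hw
  refine ⟨d.toProd.2, e.toProd.1, ?_, ?_, ?_, ?_⟩
  · intro hab
    refine not_both_darts hc (x := w) (y := d.toProd.2) ⟨d, hd, Prod.ext hdw rfl⟩
      ⟨e, he, Prod.ext ?_ hew⟩
    rw [← hab]
  · have := d.adj; rw [mem_neighborSet, ← hdw]; exact this
  · have := e.adj; rw [mem_neighborSet, ← hew]; exact (this.symm)
  · ext u
    simp only [mem_neighborSet, deleteEdges_adj, Set.mem_setOf_eq, Set.mem_diff,
      Set.mem_insert_iff, Set.mem_singleton_iff]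
    constructor
    · rintro ⟨hadj, hne⟩
      refine ⟨hadj, ?_⟩
      rintro (rfl | rfl)
      · exact hne (edge_mem_cycle_iff.2 (Or.inl ⟨d, hd, Prod.ext hdw rfl⟩))
      · exact hne (edge_mem_cycle_iff.2 (Or.inr ⟨e, he, Prod.ext rfl hew⟩))
    · rintro ⟨hadj, hne⟩
      refine ⟨hadj, ?_⟩
      intro hmem
      rcases edge_mem_cycle_iff.1 hmem with ⟨d', hd', hde⟩ | ⟨e', he', hee⟩
      · apply hne; left
        have : d' = d := hund d' ⟨hd', by rw [hde]⟩
        rw [this] at hde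
        exact (congrArg Prod.snd hde).symm
      · apply hne; right
        have : e' = e := hune e' ⟨he', by rw [hee]⟩
        rw [this] at hee
        exact (congrArg Prod.fst hee).symm

end OrientAux

end OrientPart

section OrientMain
variable {V' : Type*} [Fintype V'] [DecidableEq V']

lemma degree_eq_ncard (G : SimpleGraph V') [DecidableRel G.Adj] (v : V') :
    G.degree v = (G.neighborSet v).ncard :=
  (Set.ncard_eq_toFinset_card' _).symm

theorem orient_even :
    ∀ (m : ℕ) (H : SimpleGraph V'), H.edgeSet.ncard = m →
      (∀ v, Even (H.neighborSet v).ncard) →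
      ∃ O : Finset (V' × V'), (∀ p ∈ O, H.Adj p.1 p.2) ∧
        (∀ x y, H.Adj x y → ((x,y) ∈ O ↔ (y,x) ∉ O)) ∧
        (∀ w, #(O.filter (fun p => p.1 = w)) = #(O.filter (fun p => p.2 = w))) := by
  intro m
  induction m using Nat.strong_induction_on with
  | _ m ih =>
  intro H hm hev
  classical
  by_cases hE : ∀ x y, ¬ H.Adj x y
  · exact ⟨∅, by simp, fun x y h => absurd h (hE x y), by simp⟩
  push_neg at hE
  obtain ⟨x, y, hadj⟩ := hE
  -- H is not acyclic
  have hnac : ¬ H.IsAcyclic := by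
    intro hac
    have hb := (isAcyclic_iff_forall_adj_isBridge.mp hac) hadj
    rw [isBridge_iff] at hb
    have hxy : x ≠ y := hadj.ne
    set H1 := H.deleteEdges {s(x,y)} with hH1
    have hNx : H1.neighborSet x = H.neighborSet x \ {y} := by
      ext u
      simp only [mem_neighborSet, hH1, deleteEdges_adj, Set.mem_singleton_iff, Set.mem_diff]
      constructor
      · rintro ⟨ha, hne⟩
        exact ⟨ha, fun h => hne (by rw [h])⟩
      · rintro ⟨ha, hne⟩
        exact ⟨ha, fun h => hne (Sym2.congr_right.mp h)⟩
    have hNy : H1.neighborSet y = H.neighborSet y \ {x} := by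
      ext u
      simp only [mem_neighborSet, hH1, deleteEdges_adj, Set.mem_singleton_iff, Set.mem_diff]
      constructor
      · rintro ⟨ha, hne⟩
        exact ⟨ha, fun h => hne (by rw [h]; exact Sym2.eq_swap)⟩
      · rintro ⟨ha, hne⟩
        refine ⟨ha, fun h => ?_⟩
        rcases Sym2.eq_iff.mp h with ⟨h1, _⟩ | ⟨_, h2⟩
        · exact hxy h1.symm
        · exact hne h2
    have hNw : ∀ w, w ≠ x → w ≠ y → H1.neighborSet w = H.neighborSet w := by
      intro w hwx hwy
      ext u
      simp only [mem_neighborSet, hH1, deleteEdges_adj, Set.mem_singleton_iff,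
        and_iff_left_iff_imp]
      intro _ h
      rcases Sym2.eq_iff.mp h with ⟨h1, _⟩ | ⟨h1, _⟩
      · exact hwx h1
      · exact hwy h1
    have hoddx : Odd ((H1.neighborSet x).ncard) := by
      rw [hNx, Set.ncard_diff_singleton_of_mem (show y ∈ H.neighborSet x from hadj)]
      have hpos : 0 < (H.neighborSet x).ncard :=
        Set.ncard_pos (Set.toFinite _) |>.mpr ⟨y, hadj⟩
      have hex := hev x
      rw [Nat.even_iff] at hex
      rw [Nat.odd_iff]
      omega
    have honly : ∀ w, Odd ((H1.neighborSet w).ncard) → w = x ∨ w = y := by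
      intro w hodd
      by_contra hcon
      push_neg at hcon
      rw [hNw w hcon.1 hcon.2] at hodd
      rw [Nat.odd_iff] at hodd
      have := hev w
      rw [Nat.even_iff] at this
      omega
    set C := (H1.connectedComponentMk x).supp with hC
    have hxC : x ∈ C := by rw [hC, ConnectedComponent.mem_supp_iff]
    set K := H1.induce C with hK
    have hclosed : ∀ (u w : V'), u ∈ C → H1.Adj u w → w ∈ C := by
      intro u w hu ha
      rw [ConnectedComponent.mem_supp_iff] at hu ⊢
      rw [← hu]
      exact (ConnectedComponent.connectedComponentMk_eq_of_adj ha).symm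
    have hdegK : ∀ u : C, (K.neighborSet u).ncard = (H1.neighborSet ↑u).ncard := by
      intro u
      have himg : H1.neighborSet ↑u = Subtype.val '' (K.neighborSet u) := by
        ext w
        simp only [Set.mem_image, mem_neighborSet]
        constructor
        · intro ha
          exact ⟨⟨w, hclosed _ _ u.2 ha⟩, ha, rfl⟩
        · rintro ⟨w', hw', rfl⟩
          exact hw'
      rw [himg, Set.ncard_image_of_injective _ Subtype.val_injective]
    have hoddK : Odd (K.degree ⟨x, hxC⟩) := by
      rw [degree_eq_ncard, hdegK]
      exact hoddx
    obtain ⟨w, hwne, hwodd⟩ := K.exists_ne_odd_degree_of_exists_odd_degree ⟨x, hxC⟩ hoddK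
    rw [degree_eq_ncard, hdegK] at hwodd
    rcases honly _ hwodd with hwx | hwy
    · exact hwne (Subtype.ext hwx)
    · have hyC : (w : V') ∈ C := w.2
      rw [hwy, hC, ConnectedComponent.mem_supp_iff] at hyC
      exact hb (ConnectedComponent.exact hyC).symm
  -- extract a cycle
  simp only [SimpleGraph.IsAcyclic] at hnac
  push_neg at hnac
  obtain ⟨v, c, hc⟩ := hnac
  set H2 := H.deleteEdges {e | e ∈ c.edges} with hH2
  have hevenH2 : ∀ w, Even ((H2.neighborSet w).ncard) := by
    intro w
    by_cases hw : w ∈ c.support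
    · obtain ⟨a, b, hab, haN, hbN, hNeq⟩ := deleteEdges_cycle_nbhd_mem hc w hw
      have hsub : ({a, b} : Set V') ⊆ H.neighborSet w := by
        rintro z (rfl | rfl)
        · exact haN
        · exact hbN
      rw [hH2, hNeq, Set.ncard_diff hsub (Set.toFinite _), Set.ncard_pair hab]
      have h2le : 2 ≤ (H.neighborSet w).ncard := by
        rw [← Set.ncard_pair hab]
        exact Set.ncard_le_ncard hsub (Set.toFinite _)
      have := hev w
      rw [Nat.even_iff] at this ⊢
      omega
    · rw [hH2, deleteEdges_cycle_nbhd hc w hw]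
      exact hev w
  have hlt : H2.edgeSet.ncard < m := by
    rw [hH2, edgeSet_deleteEdges, ← hm]
    have hlen : 0 < c.edges.length := by
      rw [Walk.length_edges]
      have := hc.three_le_length
      omega
    obtain ⟨e0, he0⟩ := List.exists_mem_of_length_pos hlen
    refine Set.ncard_lt_ncard ?_ (Set.toFinite _)
    refine ⟨Set.diff_subset, fun hsub => ?_⟩
    have h1 : e0 ∈ H.edgeSet := c.edges_subset_edgeSet he0
    have h2 := hsub h1
    simp only [Set.mem_diff, Set.mem_setOf_eq] at h2
    exact h2.2 he0
  obtain ⟨O', hO1, hO2, hO3⟩ := ih _ hlt H2 rfl hevenH2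
  have hdisj : Disjoint O' (cycO c) := by
    rw [Finset.disjoint_left]
    intro p hp hpc
    have h := hO1 p hp
    rw [hH2, deleteEdges_adj] at h
    exact h.2 (cycO_edge hpc)
  refine ⟨O' ∪ cycO c, ?_, ?_, ?_⟩
  · intro p hp
    rcases Finset.mem_union.1 hp with h | h
    · have h := hO1 p h
      rw [hH2, deleteEdges_adj] at h
      exact h.1
    · exact cycO_adj h
  · intro a b hab
    by_cases he : s(a,b) ∈ c.edges
    · have hn1 : (a,b) ∉ O' := by
        intro hmem
        have h := hO1 _ hmem
        rw [hH2, deleteEdges_adj] at h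
        exact h.2 he
      have hn2 : (b,a) ∉ O' := by
        intro hmem
        have h := hO1 _ hmem
        rw [hH2, deleteEdges_adj] at h
        refine h.2 ?_
        rw [show s(b,a) = s(a,b) from Sym2.eq_swap]
        exact he
      simp only [Finset.mem_union, hn1, hn2, false_or]
      exact cycO_xor hc he
    · have h2 : H2.Adj a b := by
        rw [hH2, deleteEdges_adj]
        exact ⟨hab, he⟩
      have hn1 : (a,b) ∉ cycO c := fun h => he (cycO_edge h)
      have hn2 : (b,a) ∉ cycO c := by
        intro h
        have := cycO_edge h
        rw [show s(b,a) = s(a,b) from Sym2.eq_swap] at this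
        exact he this
      simp only [Finset.mem_union, hn1, hn2, or_false]
      exact hO2 a b h2
  · intro w
    rw [Finset.filter_union, Finset.filter_union,
      Finset.card_union_of_disjoint (Finset.disjoint_filter_filter hdisj),
      Finset.card_union_of_disjoint (Finset.disjoint_filter_filter hdisj),
      hO3 w, cycO_filter_fst hc w, cycO_filter_snd hc w]
end OrientMain

section PetersenPart
variable {V : Type*} [Fintype V] [DecidableEq V]

theorem regular_twofactors (G H : SimpleGraph V) (hHG : H ≤ G) (k : ℕ)
    (hreg : ∀ v, (H.neighborSet v).ncard = 2*k) : IsKHLD G k := by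
  classical
  obtain ⟨O, hOadj, hOxor, hObal⟩ := orient_even (H.edgeSet.ncard) H rfl
    (fun v => by rw [hreg]; exact ⟨k, two_mul k⟩)
  have hsplit : ∀ w, #(O.filter (fun p => p.1 = w)) + #(O.filter (fun p => p.2 = w))
      = (H.neighborSet w).ncard := by
    intro w
    have hset : H.neighborSet w =
        ↑(((O.filter (fun p => p.1 = w)).image Prod.snd) ∪
          ((O.filter (fun p => p.2 = w)).image Prod.fst)) := by
      ext u
      simp only [Finset.coe_union, Set.mem_union, Finset.coe_image, Set.mem_image,
        Finset.mem_coe, Finset.mem_filter, mem_neighborSet]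
      constructor
      · intro ha
        by_cases hw : (w, u) ∈ O
        · exact Or.inl ⟨(w,u), ⟨hw, rfl⟩, rfl⟩
        · have hmem : (u, w) ∈ O := by
            by_contra hcon
            exact hw ((hOxor w u ha).2 hcon)
          exact Or.inr ⟨(u,w), ⟨hmem, rfl⟩, rfl⟩
      · rintro (⟨p, ⟨hp, hp1⟩, rfl⟩ | ⟨p, ⟨hp, hp2⟩, rfl⟩)
        · have := hOadj p hp
          rw [hp1] at this
          exact this
        · have := hOadj p hp
          rw [hp2] at this
          exact this.symm
    have hdisjim : Disjoint ((O.filter (fun p => p.1 = w)).image Prod.snd)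
        ((O.filter (fun p => p.2 = w)).image Prod.fst) := by
      rw [Finset.disjoint_left]
      rintro u hu1 hu2
      simp only [Finset.mem_image, Finset.mem_filter] at hu1 hu2
      obtain ⟨p, ⟨hp, hp1⟩, rfl⟩ := hu1
      obtain ⟨q, ⟨hq, hq2⟩, hq1⟩ := hu2
      have hadj := hOadj p hp
      rw [hp1] at hadj
      have hm1 : (w, p.2) ∈ O := by
        have hpe : p = (w, p.2) := Prod.ext hp1 rfl
        rwa [← hpe]
      have hm2 : (p.2, w) ∈ O := by
        have hqe : q = (p.2, w) := Prod.ext hq1 hq2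
        rwa [← hqe]
      exact ((hOxor w p.2 hadj).1 hm1) hm2
    have hc1 : #((O.filter (fun p => p.1 = w)).image Prod.snd)
        = #(O.filter (fun p => p.1 = w)) := by
      apply Finset.card_image_of_injOn
      intro p hp q hq hpq
      simp only [Finset.mem_coe, Finset.mem_filter] at hp hq
      exact Prod.ext (hp.2.trans hq.2.symm) hpq
    have hc2 : #((O.filter (fun p => p.2 = w)).image Prod.fst)
        = #(O.filter (fun p => p.2 = w)) := by
      apply Finset.card_image_of_injOn
      intro p hp q hq hpq
      simp only [Finset.mem_coe, Finset.mem_filter] at hp hq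
      exact Prod.ext hpq (hp.2.trans hq.2.symm)
    rw [hset, Set.ncard_coe_finset, Finset.card_union_of_disjoint hdisjim, hc1, hc2]
  have hout : ∀ w, #(O.filter (fun p => p.1 = w)) = k := by
    intro w
    have h1 := hsplit w
    have h2 := hObal w
    rw [hreg w] at h1
    omega
  set r : V → Finset V := fun w => (O.filter (fun p => p.1 = w)).image Prod.snd with hr
  have hrmem : ∀ w u, u ∈ r w ↔ (w, u) ∈ O := by
    intro w u
    simp only [hr, Finset.mem_image, Finset.mem_filter]
    constructor
    · rintro ⟨p, ⟨hp, hp1⟩, rfl⟩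
      have : p = (w, p.2) := Prod.ext hp1 rfl
      rwa [← this]
    · intro h
      exact ⟨(w,u), ⟨h, rfl⟩, rfl⟩
  have h1 : ∀ w, #(r w) = k := by
    intro w
    have hinjOn : Set.InjOn Prod.snd ((O.filter (fun p => p.1 = w) : Finset (V × V)) : Set (V × V)) := by
      intro p hp q hq hpq
      simp only [Finset.mem_coe, Finset.mem_filter] at hp hq
      exact Prod.ext (hp.2.trans hq.2.symm) hpq
    rw [hr]
    rw [Finset.card_image_of_injOn hinjOn, hout w]
  have h2 : ∀ u : V, #({v | u ∈ r v} : Finset V) = k := by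
    intro u
    have : ({v | u ∈ r v} : Finset V) = (O.filter (fun p => p.2 = u)).image Prod.fst := by
      ext w
      simp only [Finset.mem_filter, Finset.mem_univ, true_and, Finset.mem_image, hrmem]
      constructor
      · intro h
        exact ⟨(w,u), ⟨h, rfl⟩, rfl⟩
      · rintro ⟨p, hp, rfl⟩
        have hpe : p = (p.1, u) := Prod.ext rfl hp.2
        rw [← hpe]
        exact hp.1
    have hinjOn : Set.InjOn Prod.fst ((O.filter (fun p => p.2 = u) : Finset (V × V)) : Set (V × V)) := by
      intro p hp q hq hpq
      simp only [Finset.mem_coe, Finset.mem_filter] at hp hq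
      exact Prod.ext hpq (hp.2.trans hq.2.symm)
    rw [this, Finset.card_image_of_injOn hinjOn, ← hObal u, hout u]
  obtain ⟨f, hinj, hfr, hdist⟩ := hall_peel k r h1 h2
  have hfO : ∀ (i : Fin k) w, (w, f i w) ∈ O := fun i w => (hrmem w (f i w)).1 (hfr i w)
  have hfadj : ∀ (i : Fin k) w, H.Adj w (f i w) := fun i w => hOadj _ (hfO i w)
  have hbij : ∀ i, Function.Bijective (f i) := fun i => Finite.injective_iff_bijective.1 (hinj i)
  refine ⟨fun i => SimpleGraph.fromRel (fun a b => b = f i a), ?_, ?_⟩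
  · intro i
    constructor
    · intro a b hab
      rw [fromRel_adj] at hab
      rcases hab.2 with rfl | rfl
      · exact hHG (hfadj i a)
      · exact hHG (hfadj i b).symm
    · intro a
      set g := Function.surjInv (hbij i).2 with hg
      have hfg : ∀ u, f i (g u) = u := fun u => Function.surjInv_eq (hbij i).2 u
      have hNeq : (SimpleGraph.fromRel (fun a b => b = f i a)).neighborSet a = {f i a, g a} := by
        ext u
        simp only [mem_neighborSet, fromRel_adj, Set.mem_insert_iff, Set.mem_singleton_iff]
        constructor
        · rintro ⟨hne, rfl | ha⟩
          · exact Or.inl rfl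
          · refine Or.inr ?_
            have : f i (g a) = f i u := by rw [hfg, ha]
            exact ((hinj i) this).symm
        · rintro (rfl | rfl)
          · exact ⟨(hfadj i a).ne, Or.inl rfl⟩
          · refine ⟨?_, Or.inr (hfg a).symm⟩
            have hga := (hfadj i (g a)).ne'
            rw [hfg a] at hga
            exact hga
      rw [hNeq]
      rw [Set.ncard_pair]
      intro hcon
      have hO1 : (a, f i a) ∈ O := hfO i a
      have hO2 : (f i a, a) ∈ O := by
        have := hfO i (g a)
        rw [hfg] at this
        rwa [← hcon] at this
      exact ((hOxor a (f i a) (hfadj i a)).1 hO1) hO2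
  · intro i j hij
    rw [disjoint_iff]
    ext a u
    simp only [inf_adj, fromRel_adj, bot_adj, iff_false]
    rintro ⟨⟨hne, hi⟩, ⟨-, hj⟩⟩
    rcases hi with rfl | ha <;> rcases hj with hj | hj
    · exact hdist i j a hij hj
    · have hO1 : (a, f i a) ∈ O := hfO i a
      have hO2 : (f i a, a) ∈ O := by
        have := hfO j (f i a)
        rwa [← hj] at this
      exact ((hOxor a (f i a) (hfadj i a)).1 hO1) hO2
    · subst hj
      have hO1 : (a, f j a) ∈ O := hfO j a
      have hO2 : (f j a, a) ∈ O := by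
        have := hfO i (f j a)
        rwa [← ha] at this
      exact ((hOxor a (f j a) (hfadj j a)).1 hO1) hO2
    · have : f i u = f j u := by rw [← ha, ← hj]
      exact hdist i j u hij this
end PetersenPart

section InflationPart
open scoped Classical
variable {V : Type*} [Fintype V] {G : SimpleGraph V} [DecidableRel G.Adj]

lemma inflation_adj {d e : G.Dart} :
    (inflation G).Adj d e ↔ e ≠ d ∧ (e.toProd.1 = d.toProd.1 ∨ e = d.symm) := by
  rw [inflation, fromRel_adj]
  constructor
  · rintro ⟨hne, h | h⟩
    · refine ⟨Ne.symm hne, ?_⟩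
      rcases h with h | h
      · exact Or.inl h.symm
      · refine Or.inr ?_
        ext : 1
        rw [Dart.symm_toProd, h, Prod.swap_swap]
    · refine ⟨Ne.symm hne, ?_⟩
      rcases h with h | h
      · exact Or.inl h
      · exact Or.inr (Dart.ext _ _ h)
  · rintro ⟨hne, h | h⟩
    · exact ⟨Ne.symm hne, Or.inl (Or.inl h.symm)⟩
    · exact ⟨Ne.symm hne, Or.inr (Or.inr (by rw [h, Dart.symm_toProd]))⟩

lemma inflation_nbhd (S : Set G.Dart) (d : G.Dart) :
    (S ∩ (inflation G).neighborSet d).ncard + (if d ∈ S then 1 else 0)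
      = (S ∩ {e : G.Dart | e.toProd.1 = d.toProd.1}).ncard + (if d.symm ∈ S then 1 else 0) := by
  set T := S.toFinset with hT
  have h1 : S ∩ (inflation G).neighborSet d =
      ↑(T.filter (fun e => (e.toProd.1 = d.toProd.1 ∧ e ≠ d) ∨ e = d.symm)) := by
    ext e
    simp only [Set.mem_inter_iff, mem_neighborSet, Finset.coe_filter, Set.mem_setOf_eq,
      hT, Set.mem_toFinset]
    constructor
    · rintro ⟨hS, hadj⟩
      rw [inflation_adj] at hadj
      obtain ⟨hne, hcase⟩ := hadj
      refine ⟨hS, ?_⟩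
      rcases hcase with h | h
      · exact Or.inl ⟨h, hne⟩
      · exact Or.inr h
    · rintro ⟨hS, hcase⟩
      refine ⟨hS, ?_⟩
      rw [inflation_adj]
      rcases hcase with ⟨h, hne⟩ | h
      · exact ⟨hne, Or.inl h⟩
      · refine ⟨by rw [h]; exact d.symm_ne, Or.inr h⟩
  have h2 : S ∩ {e : G.Dart | e.toProd.1 = d.toProd.1} =
      ↑(T.filter (fun e => e.toProd.1 = d.toProd.1)) := by
    ext e
    simp [hT, Set.mem_toFinset]
  rw [h1, h2, Set.ncard_coe_finset, Set.ncard_coe_finset]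
  have hsplit : T.filter (fun e => (e.toProd.1 = d.toProd.1 ∧ e ≠ d) ∨ e = d.symm)
      = T.filter (fun e => e.toProd.1 = d.toProd.1 ∧ e ≠ d) ∪ T.filter (fun e => e = d.symm) := by
    rw [← Finset.filter_or]
  have hdisj : Disjoint (T.filter (fun e => e.toProd.1 = d.toProd.1 ∧ e ≠ d))
      (T.filter (fun e => e = d.symm)) := by
    rw [Finset.disjoint_left]
    rintro e he1 he2
    rw [Finset.mem_filter] at he1 he2
    rw [he2.2] at he1
    have : d.toProd.2 = d.toProd.1 := by
      have := he1.2.1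
      rwa [Dart.symm_toProd] at this
    exact d.adj.ne' this
  have herase : T.filter (fun e => e.toProd.1 = d.toProd.1 ∧ e ≠ d)
      = (T.filter (fun e => e.toProd.1 = d.toProd.1)).erase d := by
    ext e
    simp only [Finset.mem_filter, Finset.mem_erase]
    tauto
  have hsingle : #(T.filter (fun e => e = d.symm)) = if d.symm ∈ S then 1 else 0 := by
    have hiff : d.symm ∈ T ↔ d.symm ∈ S := Set.mem_toFinset
    rw [Finset.filter_eq']
    by_cases h : d.symm ∈ S
    · rw [if_pos (hiff.2 h), if_pos h, Finset.card_singleton]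
    · rw [if_neg (fun hc => h (hiff.1 hc)), if_neg h, Finset.card_empty]
  rw [hsplit, Finset.card_union_of_disjoint hdisj, hsingle, herase]
  by_cases hd : d ∈ S
  · have hmem : d ∈ T.filter (fun e => e.toProd.1 = d.toProd.1) := by
      rw [Finset.mem_filter, hT, Set.mem_toFinset]
      exact ⟨hd, rfl⟩
    rw [Finset.card_erase_of_mem hmem, if_pos hd]
    have hpos : 1 ≤ #(T.filter (fun e => e.toProd.1 = d.toProd.1)) :=
      Finset.card_pos.2 ⟨d, hmem⟩
    omega
  · have hnmem : d ∉ T.filter (fun e => e.toProd.1 = d.toProd.1) := by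
      rw [Finset.mem_filter, hT, Set.mem_toFinset]
      tauto
    rw [Finset.erase_eq_of_notMem hnmem, if_neg hd]
    omega

lemma total_card (S : Set G.Dart) :
    S.ncard = ∑ x : V, (S ∩ {e : G.Dart | e.toProd.1 = x}).ncard := by
  have heq : ∀ x : V, (S ∩ {e : G.Dart | e.toProd.1 = x}).ncard
      = #(S.toFinset.filter (fun e => e.toProd.1 = x)) := by
    intro x
    rw [show S ∩ {e : G.Dart | e.toProd.1 = x}
      = ↑(S.toFinset.filter (fun e => e.toProd.1 = x)) by ext e; simp [Set.mem_toFinset],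
      Set.ncard_coe_finset]
  simp only [heq]
  rw [Set.ncard_eq_toFinset_card']
  exact Finset.card_eq_sum_card_fiberwise (fun e _ => Finset.mem_univ _)

lemma univ_fiber_card (x : V) :
    ({e : G.Dart | e.toProd.1 = x} : Set G.Dart).ncard = G.degree x := by
  classical
  rw [← G.dart_fst_fiber_card_eq_degree x, Set.ncard_eq_toFinset_card']
  congr 1
  ext e
  simp [Set.mem_toFinset]

lemma dart_exists (x : V) (hpos : 0 < G.degree x) : ∃ d : G.Dart, d.toProd.1 = x := by
  rw [← card_neighborFinset_eq_degree, Finset.card_pos] at hpos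
  obtain ⟨y, hy⟩ := hpos
  rw [mem_neighborFinset] at hy
  exact ⟨⟨(x, y), hy⟩, rfl⟩

lemma fiber_bounds {k : ℕ} (hk : 1 ≤ k) (hδ : 2 * k ≤ G.minDegree) {S : Set G.Dart}
    (hS : IsKTDS (inflation G) (2*k) S) (x : V) :
    2*k ≤ (S ∩ {e : G.Dart | e.toProd.1 = x}).ncard ∧
      ((S ∩ {e : G.Dart | e.toProd.1 = x}).ncard = 2*k →
        ∀ d : G.Dart, d ∈ S → d.toProd.1 = x → d.symm ∈ S) := by
  by_cases hA : ∃ d : G.Dart, d ∈ S ∧ d.toProd.1 = x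
  · obtain ⟨d, hdS, hdx⟩ := hA
    have hcount := inflation_nbhd S d
    rw [hdx] at hcount
    have hge := hS d
    have hle2 : (if d.symm ∈ S then 1 else 0) ≤ 1 := by split_ifs <;> omega
    rw [if_pos hdS] at hcount
    constructor
    · omega
    · intro heq d' hd'S hd'x
      have hcount' := inflation_nbhd S d'
      rw [hd'x, heq, if_pos hd'S] at hcount'
      have hge' := hS d'
      by_contra hcon
      rw [if_neg hcon] at hcount'
      omega
  · exfalso
    push_neg at hA
    have hdeg : 0 < G.degree x := by
      have := G.minDegree_le_degree x
      omega
    obtain ⟨d0, hd0⟩ := dart_exists x hdeg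
    have hcount := inflation_nbhd S d0
    have hge := hS d0
    have hempty : (S ∩ {e : G.Dart | e.toProd.1 = d0.toProd.1}).ncard = 0 := by
      rw [Set.ncard_eq_zero (Set.toFinite _)]
      ext e
      simp only [Set.mem_inter_iff, Set.mem_setOf_eq, Set.mem_empty_iff_false, iff_false]
      rintro ⟨heS, hex⟩
      exact hA e heS (by rw [hex, hd0])
    rw [hempty] at hcount
    have h1 : (if d0 ∈ S then 1 else 0) = 0 := by
      rw [if_neg]
      intro h
      exact hA d0 h hd0
    have h2 : (if d0.symm ∈ S then 1 else 0) ≤ 1 := by split_ifs <;> omega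
    omega

lemma ktds_lower {k : ℕ} (hk : 1 ≤ k) (hδ : 2 * k ≤ G.minDegree) {S : Set G.Dart}
    (hS : IsKTDS (inflation G) (2*k) S) : 2 * k * Fintype.card V ≤ S.ncard := by
  rw [total_card]
  calc 2 * k * Fintype.card V = ∑ _x : V, 2 * k := by
        rw [Finset.sum_const, Finset.card_univ, smul_eq_mul, mul_comm]
    _ ≤ _ := Finset.sum_le_sum (fun x _ => (fiber_bounds hk hδ hS x).1)

lemma ktds_univ {k : ℕ} (hδ : 2 * k ≤ G.minDegree) :
    IsKTDS (inflation G) (2*k) (Set.univ : Set G.Dart) := by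
  intro d
  have hcount := inflation_nbhd (Set.univ : Set G.Dart) d
  rw [if_pos (Set.mem_univ d), if_pos (Set.mem_univ d.symm), Set.univ_inter,
    Set.univ_inter, univ_fiber_card] at hcount
  rw [Set.univ_inter]
  have hdeg := G.minDegree_le_degree d.toProd.1
  omega

lemma equality_subgraph {k : ℕ} (hk : 1 ≤ k) (hδ : 2 * k ≤ G.minDegree) {S : Set G.Dart}
    (hS : IsKTDS (inflation G) (2*k) S) (hcard : S.ncard = 2 * k * Fintype.card V) :
    ∃ H : SimpleGraph V, H ≤ G ∧ ∀ v, (H.neighborSet v).ncard = 2*k := by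
  have hfib : ∀ x : V, (S ∩ {e : G.Dart | e.toProd.1 = x}).ncard = 2*k := by
    by_contra hcon
    push_neg at hcon
    obtain ⟨x0, hx0⟩ := hcon
    have hlt : 2*k < (S ∩ {e : G.Dart | e.toProd.1 = x0}).ncard :=
      lt_of_le_of_ne (fiber_bounds hk hδ hS x0).1 (Ne.symm hx0)
    have hsum : ∑ _x : V, 2*k < ∑ x : V, (S ∩ {e : G.Dart | e.toProd.1 = x}).ncard :=
      Finset.sum_lt_sum (fun x _ => (fiber_bounds hk hδ hS x).1) ⟨x0, Finset.mem_univ _, hlt⟩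
    rw [← total_card, Finset.sum_const, Finset.card_univ, smul_eq_mul, hcard,
      mul_comm] at hsum
    exact lt_irrefl _ hsum
  have hclosed : ∀ d : G.Dart, d ∈ S → d.symm ∈ S := fun d hd =>
    (fiber_bounds hk hδ hS d.toProd.1).2 (hfib _) d hd rfl
  refine ⟨{ Adj := fun a b => ∃ h : G.Adj a b, (⟨(a,b),h⟩ : G.Dart) ∈ S,
            symm := ?_, loopless := ?_ }, fun a b h => h.1, ?_⟩
  · constructor
    rintro a b ⟨h, hm⟩
    exact ⟨h.symm, hclosed _ hm⟩
  · constructor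
    rintro a ⟨h, _⟩
    exact G.loopless.irrefl a h
  · intro x
    have himg : {u | ∃ h : G.Adj x u, (⟨(x,u),h⟩ : G.Dart) ∈ S}
        = (fun e : G.Dart => e.toProd.2) '' (S ∩ {e : G.Dart | e.toProd.1 = x}) := by
      ext u
      simp only [Set.mem_setOf_eq, Set.mem_image, Set.mem_inter_iff]
      constructor
      · rintro ⟨h, hm⟩
        exact ⟨⟨(x,u),h⟩, ⟨hm, rfl⟩, rfl⟩
      · rintro ⟨e, ⟨heS, hex⟩, rfl⟩
        have hadj : G.Adj x e.toProd.2 := by rw [← hex]; exact e.adj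
        refine ⟨hadj, ?_⟩
        have hde : (⟨(x, e.toProd.2), hadj⟩ : G.Dart) = e := by
          ext : 1
          exact Prod.ext hex.symm rfl
        rwa [hde]
    show ({u | ∃ h : G.Adj x u, (⟨(x,u),h⟩ : G.Dart) ∈ S} : Set V).ncard = 2*k
    rw [himg, Set.ncard_image_of_injOn, hfib x]
    rintro e ⟨-, he⟩ e' ⟨-, he'⟩ hee
    exact Dart.ext _ _ (Prod.ext (he.trans he'.symm) hee)

lemma graphs_disjoint_not_adj {A B : SimpleGraph V} (h : Disjoint A B) {x u : V}
    (ha : A.Adj x u) (hb : B.Adj x u) : False := by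
  rw [disjoint_iff] at h
  have : (A ⊓ B).Adj x u := ⟨ha, hb⟩
  rw [h] at this
  exact this

lemma khld_to_set {k : ℕ} (hKHLD : IsKHLD G k) :
    ∃ S : Set G.Dart, IsKTDS (inflation G) (2*k) S ∧ S.ncard = 2 * k * Fintype.card V := by
  obtain ⟨F, hF, hdisj⟩ := hKHLD
  set S : Set G.Dart := {d | ∃ i, (F i).Adj d.toProd.1 d.toProd.2} with hSdef
  have hclosed : ∀ d : G.Dart, d ∈ S → d.symm ∈ S := by
    rintro d ⟨i, hi⟩
    exact ⟨i, by rw [Dart.symm_toProd]; exact hi.symm⟩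
  have hfib : ∀ x : V, (S ∩ {e : G.Dart | e.toProd.1 = x}).ncard = 2*k := by
    intro x
    have himg : (fun e : G.Dart => e.toProd.2) '' (S ∩ {e : G.Dart | e.toProd.1 = x})
        = {u | ∃ i, (F i).Adj x u} := by
      ext u
      simp only [Set.mem_image, Set.mem_inter_iff, Set.mem_setOf_eq, hSdef]
      constructor
      · rintro ⟨e, ⟨⟨i, hi⟩, hex⟩, rfl⟩
        exact ⟨i, by rwa [← hex]⟩
      · rintro ⟨i, hi⟩
        have hadj : G.Adj x u := (hF i).1 hi
        exact ⟨⟨(x,u), hadj⟩, ⟨⟨i, hi⟩, rfl⟩, rfl⟩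
    have hinj : Set.InjOn (fun e : G.Dart => e.toProd.2)
        (S ∩ {e : G.Dart | e.toProd.1 = x}) := by
      rintro e ⟨-, he⟩ e' ⟨-, he'⟩ hee
      exact Dart.ext _ _ (Prod.ext (he.trans he'.symm) hee)
    rw [← Set.ncard_image_of_injOn hinj, himg]
    have hunion : {u | ∃ i, (F i).Adj x u}
        = ↑(Finset.univ.biUnion (fun i : Fin k => Finset.univ.filter (fun u => (F i).Adj x u))) := by
      ext u
      simp
    rw [hunion, Set.ncard_coe_finset, Finset.card_biUnion]
    · have hval : ∀ i : Fin k, #(Finset.univ.filter (fun u => (F i).Adj x u)) = 2 := by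
        intro i
        have := (hF i).2 x
        rw [show (F i).neighborSet x = ↑(Finset.univ.filter (fun u => (F i).Adj x u)) by
          ext u; simp, Set.ncard_coe_finset] at this
        exact this
      rw [Finset.sum_congr rfl (fun i _ => hval i), Finset.sum_const, Finset.card_univ,
        Fintype.card_fin, smul_eq_mul]
      omega
    · intro i _ j _ hij
      rw [Function.onFun, Finset.disjoint_left]
      intro u hu1 hu2
      rw [Finset.mem_filter] at hu1 hu2
      exact graphs_disjoint_not_adj (hdisj i j hij) hu1.2 hu2.2
  refine ⟨S, ?_, ?_⟩
  · intro d
    have hcount := inflation_nbhd S d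
    rw [hfib] at hcount
    by_cases hd : d ∈ S
    · rw [if_pos hd, if_pos (hclosed d hd)] at hcount
      omega
    · rw [if_neg hd] at hcount
      have : (if d.symm ∈ S then 1 else 0) ≤ 1 := by split_ifs <;> omega
      omega
  · rw [total_card]
    rw [Finset.sum_congr rfl (fun x _ => hfib x), Finset.sum_const, Finset.card_univ,
      smul_eq_mul, mul_comm]

end InflationPart


/-- **Theorem (`γ_{×2k,t}(G_I) = 2kn` iff `G` is a kHLD-graph).** -/
theorem stmt3 {V : Type*} [Fintype V] (G : SimpleGraph V) [DecidableRel G.Adj]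
    (n k : ℕ) (hn : Fintype.card V = n) (hk : 1 ≤ k) (hδ : 2 * k ≤ G.minDegree) :
    ktdn (inflation G) (2 * k) = 2 * k * n ↔ IsKHLD G k := by

  classical
  subst hn
  have hne : {m | ∃ S : Set G.Dart, IsKTDS (inflation G) (2*k) S ∧ S.ncard = m}.Nonempty :=
    ⟨_, Set.univ, ktds_univ hδ, rfl⟩
  unfold ktdn
  constructor
  · intro heq
    obtain ⟨S, hS, hcard⟩ := Nat.sInf_mem hne
    rw [heq] at hcard
    obtain ⟨H, hHG, hreg⟩ := equality_subgraph hk hδ hS hcard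
    exact regular_twofactors G H hHG k hreg
  · intro hKHLD
    obtain ⟨S, hS, hcard⟩ := khld_to_set hKHLD
    apply le_antisymm
    · exact Nat.sInf_le ⟨S, hS, hcard⟩
    · refine le_csInf hne ?_
      rintro m ⟨S', hS', hcard'⟩
      rw [← hcard']
      exact ktds_lower hk hδ hS'
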